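/- Let H, Q be real Hilbert spaces, a : H × H → ℝ and b : H × Q → ℝ bounded bilinear forms, with a coercive on the kernel K = {v ∈ H : b(v,q) = 0 ∀q ∈ Q} with constant α > 0, and b satisfying the inf-sup condition with constant β > 0. Then for every bounded linear functional ℓ on H there exists a unique pair (u,φ) ∈ H × Q with a(u,v) + b(v,φ) = ℓ(v) for all v ∈ H and b(u,q) = 0 for all q ∈ Q; moreover ‖u‖_H + ‖φ‖_Q ≤ C‖ℓ‖ with C depending only on α, β and the continuity constants of a and b. -/

import Mathlib

open InnerProductSpace RealInnerProductSpace

set_option maxHeartbeats 1000000 in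
/-- Babuška–Brezzi well-posedness for abstract saddle-point problems. -/
theorem babuska_brezzi_wellposed
    {H Q : Type*} [NormedAddCommGroup H] [InnerProductSpace ℝ H] [CompleteSpace H]
    [NormedAddCommGroup Q] [InnerProductSpace ℝ Q] [CompleteSpace Q]
    (a : H →L[ℝ] H →L[ℝ] ℝ) (b : H →L[ℝ] Q →L[ℝ] ℝ)
    (α : ℝ) (hα : 0 < α)
    (hcoer : ∀ v : H, (∀ q : Q, b v q = 0) → α * ‖v‖ ^ 2 ≤ a v v)
    (β : ℝ) (hβ : 0 < β)
    (hinfsup : ∀ q : Q, β * ‖q‖ ≤ ⨆ v : {v : H // v ≠ 0}, b (v : H) q / ‖(v : H)‖) :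
    ∃ C : ℝ, 0 < C ∧ ∀ ℓ : H →L[ℝ] ℝ,
      (∃! uφ : H × Q,
        (∀ v : H, a uφ.1 v + b v uφ.2 = ℓ v) ∧ (∀ q : Q, b uφ.1 q = 0)) ∧
      (∀ uφ : H × Q,
        ((∀ v : H, a uφ.1 v + b v uφ.2 = ℓ v) ∧ (∀ q : Q, b uφ.1 q = 0)) →
        ‖uφ.1‖ + ‖uφ.2‖ ≤ C * ‖ℓ‖) := by
  classical
  -- the operator T : Q → H with ⟪T q, v⟫ = b v q
  set T : Q →L[ℝ] H :=
    ((InnerProductSpace.toDual ℝ H).symm.toContinuousLinearEquiv :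
      (H →L[ℝ] ℝ) ≃L[ℝ] H).toContinuousLinearMap.comp b.flip with hTdef
  have hT : ∀ (q : Q) (v : H), ⟪T q, v⟫_ℝ = b v q := by
    intro q v
    simp [hTdef, toDual_symm_apply]
  -- lower bound β‖q‖ ≤ ‖T q‖
  have hTlow : ∀ q : Q, β * ‖q‖ ≤ ‖T q‖ := by
    intro q
    refine (hinfsup q).trans ?_
    by_cases hne : Nonempty {v : H // v ≠ 0}
    · refine ciSup_le fun v => ?_
      have hv : (0:ℝ) < ‖(v:H)‖ := norm_pos_iff.mpr v.2
      rw [div_le_iff₀ hv]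
      calc b (v:H) q = ⟪T q, (v:H)⟫_ℝ := (hT q v).symm
        _ ≤ ‖T q‖ * ‖(v:H)‖ := real_inner_le_norm _ _
    · haveI : IsEmpty {v : H // v ≠ 0} := not_nonempty_iff.mp hne
      rw [Real.iSup_of_isEmpty]
      positivity
  -- T is injective with closed range
  have hTanti : AntilipschitzWith (β⁻¹.toNNReal) T := by
    refine T.antilipschitz_of_bound fun q => ?_
    rw [Real.coe_toNNReal _ (le_of_lt (inv_pos.mpr hβ))]
    rw [inv_mul_eq_div, le_div_iff₀ hβ]
    linarith [hTlow q]
  have hTclosed : IsClosed (Set.range T) := hTanti.isClosed_range T.uniformContinuous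
  set R : Submodule ℝ H := LinearMap.range (T : Q →ₗ[ℝ] H) with hRdef
  have hRclosed : IsClosed (R : Set H) := hTclosed
  haveI : CompleteSpace R := hRclosed.completeSpace_coe
  -- the kernel K
  set K : Submodule ℝ H := LinearMap.ker (b : H →ₗ[ℝ] Q →L[ℝ] ℝ) with hKdef
  have hKmem : ∀ v : H, v ∈ K ↔ ∀ q : Q, b v q = 0 := by
    intro v
    rw [hKdef, LinearMap.mem_ker]
    constructor
    · intro h q; rw [show b v = 0 from h]; rfl
    · intro h; ext q; exact h q
  have hKclosed : IsClosed (K : Set H) := ContinuousLinearMap.isClosed_ker b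
  haveI : CompleteSpace K := hKclosed.completeSpace_coe
  -- R⊥ = K, hence K⊥ = R
  have hRperp : Rᗮ = K := by
    ext v
    rw [Submodule.mem_orthogonal, hKmem]
    constructor
    · intro h q
      rw [← hT q v]
      exact h (T q) ⟨q, rfl⟩
    · rintro h u ⟨q, rfl⟩
      show ⟪T q, v⟫_ℝ = 0
      rw [hT q v]; exact h q
  have hKperp : Kᗮ = R := by rw [← hRperp, Submodule.orthogonal_orthogonal]
  -- restricted bilinear form on K, coercive
  set ι : K →L[ℝ] H := K.subtypeL with hιdef
  set aK : K →L[ℝ] K →L[ℝ] ℝ := ((a.comp ι).flip.comp ι).flip with haKdef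
  have haK : ∀ u v : K, aK u v = a (u : H) (v : H) := fun u v => rfl
  have hcoK : IsCoercive aK := by
    refine ⟨α, hα, fun u => ?_⟩
    have h1 : α * ‖(u : H)‖ ^ 2 ≤ a (u : H) (u : H) :=
      hcoer (u : H) ((hKmem (u : H)).mp u.2)
    rw [haK]
    calc α * ‖u‖ * ‖u‖ = α * ‖(u : H)‖ ^ 2 := by rw [Submodule.norm_coe]; ring
      _ ≤ a (u : H) (u : H) := h1
  set E := hcoK.continuousLinearEquivOfBilin with hEdef
  -- the constant
  refine ⟨1/α + (1 + ‖a‖/α)/β, by positivity, fun ℓ => ?_⟩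
  -- the a-priori bound, valid for any solution
  have hbound : ∀ uφ : H × Q,
      ((∀ v : H, a uφ.1 v + b v uφ.2 = ℓ v) ∧ (∀ q : Q, b uφ.1 q = 0)) →
      ‖uφ.1‖ + ‖uφ.2‖ ≤ (1/α + (1 + ‖a‖/α)/β) * ‖ℓ‖ := by
    rintro ⟨u, φ⟩ ⟨h1, h2⟩
    simp only at h1 h2 ⊢
    have huu : a u u = ℓ u := by have := h1 u; rw [h2 φ] at this; linarith
    have hub : ‖u‖ ≤ ‖ℓ‖ / α := by
      rcases eq_or_lt_of_le (norm_nonneg u) with h0 | h0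
      · rw [← h0]; positivity
      · have hc : α * ‖u‖ ^ 2 ≤ a u u := hcoer u h2
        have hl : ℓ u ≤ ‖ℓ‖ * ‖u‖ :=
          le_trans (le_abs_self _) (ℓ.le_opNorm u)
        rw [le_div_iff₀ hα]
        nlinarith
    have hTφ : ‖T φ‖ ≤ ‖ℓ‖ + ‖a‖ * ‖u‖ := by
      rcases eq_or_lt_of_le (norm_nonneg (T φ)) with h0 | h0
      · rw [← h0]; positivity
      · have hsq : b (T φ) φ = ‖T φ‖ ^ 2 := by
          rw [← hT φ (T φ)]; exact real_inner_self_eq_norm_sq _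
        have hb2 : b (T φ) φ = ℓ (T φ) - a u (T φ) := by linarith [h1 (T φ)]
        have hl : ℓ (T φ) ≤ ‖ℓ‖ * ‖T φ‖ :=
          le_trans (le_abs_self _) (ℓ.le_opNorm _)
        have ha2 : -(a u (T φ)) ≤ ‖a‖ * ‖u‖ * ‖T φ‖ :=
          le_trans (neg_le_abs _) (a.le_opNorm₂ u (T φ))
        nlinarith
    have hφb : ‖φ‖ ≤ (‖ℓ‖ + ‖a‖ * ‖u‖) / β := by
      rw [le_div_iff₀ hβ]
      calc ‖φ‖ * β = β * ‖φ‖ := by ring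
        _ ≤ ‖T φ‖ := hTlow φ
        _ ≤ ‖ℓ‖ + ‖a‖ * ‖u‖ := hTφ
    have hna : (0:ℝ) ≤ ‖a‖ := norm_nonneg a
    calc ‖u‖ + ‖φ‖ ≤ ‖ℓ‖ / α + (‖ℓ‖ + ‖a‖ * ‖u‖) / β := add_le_add hub hφb
      _ ≤ ‖ℓ‖ / α + (‖ℓ‖ + ‖a‖ * (‖ℓ‖ / α)) / β := by gcongr
      _ = (1/α + (1 + ‖a‖/α)/β) * ‖ℓ‖ := by field_simp
  refine ⟨?_, hbound⟩
  -- existence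
  have hex : ∃ uφ : H × Q,
      (∀ v : H, a uφ.1 v + b v uφ.2 = ℓ v) ∧ (∀ q : Q, b uφ.1 q = 0) := by
    set f : K := (InnerProductSpace.toDual ℝ K).symm (ℓ.comp ι) with hfdef
    set u' : K := E.symm f with hu'def
    have hu'1 : ∀ w : K, a (u' : H) (w : H) = ℓ (w : H) := by
      intro w
      have h1 : ⟪E u', w⟫_ℝ = aK u' w := hcoK.continuousLinearEquivOfBilin_apply u' w
      have h2 : E u' = f := E.apply_symm_apply f
      have h3 : ⟪f, w⟫_ℝ = ℓ (w : H) := toDual_symm_apply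
      rw [← haK u' w, ← h1, h2, h3]
    set g : H →L[ℝ] ℝ := ℓ - a (u' : H) with hgdef
    set r : H := (InnerProductSpace.toDual ℝ H).symm g with hrdef
    have hr : ∀ v : H, ⟪r, v⟫_ℝ = ℓ v - a (u' : H) v := by
      intro v
      rw [hrdef]
      rw [show (⟪(InnerProductSpace.toDual ℝ H).symm g, v⟫_ℝ) = g v from toDual_symm_apply]
      simp [hgdef]
    have hrmem : r ∈ Kᗮ := by
      rw [Submodule.mem_orthogonal]
      intro w hw
      rw [real_inner_comm, hr w]
      rw [hu'1 ⟨w, hw⟩]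
      ring
    rw [hKperp] at hrmem
    obtain ⟨φ, hφ⟩ := hrmem
    refine ⟨((u' : H), φ), fun v => ?_, (hKmem (u' : H)).mp u'.2⟩
    have : b v φ = ℓ v - a (u' : H) v := by
      rw [← hr v, ← hT φ v]; exact congrArg (fun x => ⟪x, v⟫_ℝ) hφ
    simp only
    linarith
  -- uniqueness
  obtain ⟨⟨u₀, φ₀⟩, hsol⟩ := hex
  refine ⟨⟨u₀, φ₀⟩, hsol, ?_⟩
  rintro ⟨u₁, φ₁⟩ ⟨g1, g2⟩
  obtain ⟨h1, h2⟩ := hsol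
  simp only at g1 g2 h1 h2
  have hdK : ∀ q : Q, b (u₁ - u₀) q = 0 := by
    intro q; rw [map_sub, ContinuousLinearMap.sub_apply, g2 q, h2 q, sub_zero]
  have hdd : ∀ v : H, a (u₁ - u₀) v + b v (φ₁ - φ₀) = 0 := by
    intro v
    rw [map_sub, ContinuousLinearMap.sub_apply, map_sub]
    have := g1 v; have := h1 v
    linarith
  have hu : u₁ = u₀ := by
    have h3 := hdd (u₁ - u₀)
    rw [hdK (φ₁ - φ₀)] at h3
    have h4 : α * ‖u₁ - u₀‖ ^ 2 ≤ 0 := by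
      have := hcoer (u₁ - u₀) hdK
      linarith
    have h5 : u₁ - u₀ = 0 := by
      by_contra hc
      have hpos : 0 < ‖u₁ - u₀‖ := norm_pos_iff.mpr hc
      exact absurd h4 (not_le.mpr (mul_pos hα (pow_pos hpos 2)))
    exact sub_eq_zero.mp h5
  have hφ : φ₁ = φ₀ := by
    have h3 : T (φ₁ - φ₀) = 0 := by
      rw [← inner_self_eq_zero (𝕜 := ℝ)]
      rw [hT (φ₁ - φ₀) (T (φ₁ - φ₀))]
      have := hdd (T (φ₁ - φ₀))
      rw [hu, sub_self, map_zero, ContinuousLinearMap.zero_apply] at this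
      linarith
    have h4 := hTlow (φ₁ - φ₀)
    rw [h3, norm_zero] at h4
    have h5 : φ₁ - φ₀ = 0 := by
      by_contra hc
      have hpos : 0 < ‖φ₁ - φ₀‖ := norm_pos_iff.mpr hc
      exact absurd h4 (not_le.mpr (mul_pos hβ hpos))
    exact sub_eq_zero.mp h5
  rw [hu, hφ]
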